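/- With G as defined and r-g < λ < r-g + α/κ, for fixed a > 0 the partial derivative in b satisfies ∂G/∂b(a,b) = [(b/a)^{1-θ₂} - (b/a)^{1-θ₁}]·((θ₁-1)(1-θ₂)/((θ₁-θ₂)(λ-(r-g))b))·[κ(λ-(r-g)) - α·1_{b>m}]; in particular ∂G/∂b(a,b) > 0 for a < b < max(a,m) and ∂G/∂b(a,b) < 0 for b > max(a,m). -/

import Mathlib

open Real Filter

noncomputable def G (r g lam α κ m θ₁ θ₂ a b : ℝ) : ℝ :=
  ((θ₁ - 1) * (b / a) ^ (1 - θ₂) + (1 - θ₂) * (b / a) ^ (1 - θ₁)) *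
    (κ / (θ₁ - θ₂) - (if m ≤ b then α else 0) / ((θ₁ - θ₂) * (lam - (r - g))))
  + (α / ((θ₁ - θ₂) * (lam - (r - g)))) *
      ((1 - θ₂) * (m / a) ^ (1 - θ₁) + (θ₁ - 1) * (m / a) ^ (1 - θ₂)) *
      (if a < m ∧ m < b then 1 else 0)
  + (α / (lam - (r - g))) * (if m ≤ a then 1 else 0)

/-- The partial derivative ∂G/∂b. -/
noncomputable def Gb (r g lam α κ m θ₁ θ₂ a b : ℝ) : ℝ :=
  ((b / a) ^ (1 - θ₂) - (b / a) ^ (1 - θ₁)) *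
    ((θ₁ - 1) * (1 - θ₂) / ((θ₁ - θ₂) * (lam - (r - g)) * b)) *
    (κ * (lam - (r - g)) - (if m < b then α else 0))

lemma hasDerivAt_rpow_div (a p : ℝ) (ha : 0 < a) {b : ℝ} (hb : 0 < b) :
    HasDerivAt (fun x : ℝ => (x / a) ^ p) (p * (b / a) ^ p / b) b := by
  have h1 : HasDerivAt (fun x : ℝ => x / a) (1 / a) b := (hasDerivAt_id b).div_const a
  have h2 := (Real.hasDerivAt_rpow_const (p := p) (x := b / a)
    (Or.inl (div_pos hb ha).ne')).comp b h1
  refine h2.congr_deriv (Eq.symm ?_)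
  rw [Real.rpow_sub (div_pos hb ha), Real.rpow_one]
  field_simp

lemma main_hasDerivAt (θ₁ θ₂ a c k : ℝ) (ha : 0 < a) {b : ℝ} (hb : 0 < b) :
    HasDerivAt (fun x : ℝ =>
        ((θ₁ - 1) * (x / a) ^ (1 - θ₂) + (1 - θ₂) * (x / a) ^ (1 - θ₁)) * c + k)
      (((b / a) ^ (1 - θ₂) - (b / a) ^ (1 - θ₁)) * ((θ₁ - 1) * (1 - θ₂) / b) * c) b := by
  have h1 := (((hasDerivAt_rpow_div a (1 - θ₂) ha hb).const_mul (θ₁ - 1)).add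
    ((hasDerivAt_rpow_div a (1 - θ₁) ha hb).const_mul (1 - θ₂)))
  have h2 := (h1.mul_const c).add_const k
  refine h2.congr_deriv (Eq.symm ?_)
  field_simp
  ring

/-- the formula for ∂G/∂b and its sign: positive for a < b < max(a,m)
and negative for b > max(a,m). -/
theorem stmt_8 (σ r g lam α κ m θ₁ θ₂ a : ℝ) (hσ : 0 < σ)
    (hα : 0 < α) (hκ : 0 < κ) (hm : 0 < m) (ha : 0 < a)
    (hlam₁ : r - g < lam) (hlam₂ : lam < r - g + α / κ)
    (hθ₁ : θ₁ > 1) (hθ₂ : θ₂ < 0)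
    (hroot₁ : (1/2) * σ ^ 2 * θ₁ * (θ₁ - 1) + (r - g) * θ₁ - lam = 0)
    (hroot₂ : (1/2) * σ ^ 2 * θ₂ * (θ₂ - 1) + (r - g) * θ₂ - lam = 0) :
    (∀ b, a < b → b ≠ m →
      HasDerivAt (fun b' => G r g lam α κ m θ₁ θ₂ a b') (Gb r g lam α κ m θ₁ θ₂ a b) b) ∧
    (∀ b, a < b → b < max a m → 0 < Gb r g lam α κ m θ₁ θ₂ a b) ∧
    (∀ b, max a m < b → Gb r g lam α κ m θ₁ θ₂ a b < 0) := by
  have hL : 0 < lam - (r - g) := sub_pos.mpr hlam₁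
  have hθd : 0 < θ₁ - θ₂ := by linarith
  refine ⟨?_, ?_, ?_⟩
  · intro b hab hbm
    have hb : 0 < b := ha.trans hab
    rcases hbm.lt_or_gt with h | h
    · -- b < m
      have hd := main_hasDerivAt θ₁ θ₂ a (κ / (θ₁ - θ₂))
        ((α / (lam - (r - g))) * (if m ≤ a then 1 else 0)) ha hb
      have heq : (fun b' => G r g lam α κ m θ₁ θ₂ a b') =ᶠ[nhds b]
          (fun x : ℝ =>
            ((θ₁ - 1) * (x / a) ^ (1 - θ₂) + (1 - θ₂) * (x / a) ^ (1 - θ₁)) *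
              (κ / (θ₁ - θ₂)) +
            (α / (lam - (r - g))) * (if m ≤ a then 1 else 0)) := by
        filter_upwards [Iio_mem_nhds h] with x hx
        have h1 : ¬ m ≤ x := not_le.mpr hx
        have h2 : ¬ (a < m ∧ m < x) := fun hc => absurd hc.2 hx.asymm
        simp only [G, if_neg h1, if_neg h2]
        ring
      have := hd.congr_of_eventuallyEq heq
      refine this.congr_deriv (Eq.symm ?_)
      simp only [Gb, if_neg (not_lt.mpr h.le)]
      field_simp
      ring
    · -- m < b
      have hd := main_hasDerivAt θ₁ θ₂ a
        (κ / (θ₁ - θ₂) - α / ((θ₁ - θ₂) * (lam - (r - g))))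
        ((α / ((θ₁ - θ₂) * (lam - (r - g)))) *
          ((1 - θ₂) * (m / a) ^ (1 - θ₁) + (θ₁ - 1) * (m / a) ^ (1 - θ₂)) *
          (if a < m then 1 else 0) +
         (α / (lam - (r - g))) * (if m ≤ a then 1 else 0)) ha hb
      have heq : (fun b' => G r g lam α κ m θ₁ θ₂ a b') =ᶠ[nhds b]
          (fun x : ℝ =>
            ((θ₁ - 1) * (x / a) ^ (1 - θ₂) + (1 - θ₂) * (x / a) ^ (1 - θ₁)) *
              (κ / (θ₁ - θ₂) - α / ((θ₁ - θ₂) * (lam - (r - g)))) +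
            ((α / ((θ₁ - θ₂) * (lam - (r - g)))) *
              ((1 - θ₂) * (m / a) ^ (1 - θ₁) + (θ₁ - 1) * (m / a) ^ (1 - θ₂)) *
              (if a < m then 1 else 0) +
             (α / (lam - (r - g))) * (if m ≤ a then 1 else 0))) := by
        filter_upwards [Ioi_mem_nhds h] with x hx
        have h1 : m ≤ x := le_of_lt hx
        have h2 : (if a < m ∧ m < x then (1:ℝ) else 0) = (if a < m then 1 else 0) :=
          if_congr (and_iff_left hx) rfl rfl
        simp only [G, if_pos h1, h2]
        ring
      have := hd.congr_of_eventuallyEq heq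
      refine this.congr_deriv (Eq.symm ?_)
      simp only [Gb, if_pos h]
      field_simp
  · intro b hab hbmax
    have hb : 0 < b := ha.trans hab
    have hbm : b < m := by
      rcases max_cases a m with ⟨he, _⟩ | ⟨he, _⟩
      · exact absurd (he ▸ hbmax) (not_lt.mpr hab.le)
      · exact he ▸ hbmax
    have hbase : 1 < b / a := (one_lt_div ha).mpr hab
    have hXY : (b / a) ^ (1 - θ₁) < (b / a) ^ (1 - θ₂) :=
      (Real.rpow_lt_rpow_left_iff hbase).mpr (by linarith)
    have h1 : 0 < (b / a) ^ (1 - θ₂) - (b / a) ^ (1 - θ₁) := sub_pos.mpr hXY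
    have h2 : 0 < (θ₁ - 1) * (1 - θ₂) / ((θ₁ - θ₂) * (lam - (r - g)) * b) := by
      apply div_pos (by nlinarith) (by positivity)
    simp only [Gb, if_neg (not_lt.mpr hbm.le), sub_zero]
    exact mul_pos (mul_pos h1 h2) (by positivity)
  · intro b hbmax
    have hab : a < b := lt_of_le_of_lt (le_max_left a m) hbmax
    have hbm : m < b := lt_of_le_of_lt (le_max_right a m) hbmax
    have hb : 0 < b := ha.trans hab
    have hbase : 1 < b / a := (one_lt_div ha).mpr hab
    have hXY : (b / a) ^ (1 - θ₁) < (b / a) ^ (1 - θ₂) :=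
      (Real.rpow_lt_rpow_left_iff hbase).mpr (by linarith)
    have h1 : 0 < (b / a) ^ (1 - θ₂) - (b / a) ^ (1 - θ₁) := sub_pos.mpr hXY
    have h2 : 0 < (θ₁ - 1) * (1 - θ₂) / ((θ₁ - θ₂) * (lam - (r - g)) * b) := by
      apply div_pos (by nlinarith) (by positivity)
    have h3 : κ * (lam - (r - g)) - α < 0 := by
      have : κ * (lam - (r - g)) < κ * (α / κ) := by
        apply mul_lt_mul_of_pos_left _ hκ
        linarith
      rw [mul_div_cancel₀ _ hκ.ne'] at this
      linarith
    simp only [Gb, if_pos hbm]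
    exact mul_neg_of_pos_of_neg (mul_pos h1 h2) h3
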